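/- arXiv:2202.08161 — 9 statements merged into one kernel-verified Lean document; each statement's English description precedes it below -/
import Mathlib

section
/- Let x ∈ X and y ∈ F(x). Then F admits a disparate selection s with s(x) = y if and only if the complement mapping F_{{x},{(x,y)}} admits a disparate selection. -/
open Set

/-- Two points of `X × Y` are disparate: they are distinct, and if their second
coordinates agree then their first coordinates are not adjacent in `G`. -/
def Disparate {X Y : Type*} (G : SimpleGraph X) (a b : X × Y) : Prop :=
  a ≠ b ∧ (a.2 = b.2 → ¬ G.Adj a.1 b.1)

/-- A set `A ⊆ X × Y` is disparate if any two distinct points of `A` are disparate. -/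
def DisparateSet {X Y : Type*} (G : SimpleGraph X) (A : Set (X × Y)) : Prop :=
  ∀ a ∈ A, ∀ b ∈ A, a ≠ b → Disparate G a b

/-- The hull of `A`: all points that fail to be disparate from some point of `A`. -/
def dispHull {X Y : Type*} (G : SimpleGraph X) (A : Set (X × Y)) : Set (X × Y) :=
  {a | ∃ a' ∈ A, ¬ Disparate G a a'}

/-- The complement of `A`: all points disparate from every point of `A`. -/
def dispCompl {X Y : Type*} (G : SimpleGraph X) (A : Set (X × Y)) : Set (X × Y) :=
  {a | ∀ a' ∈ A, Disparate G a a'}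

/-- The graph of the restriction of a set-valued mapping `F` to `V`. -/
def svGraphOn {X Y : Type*} (F : X → Set Y) (V : Set X) : Set (X × Y) :=
  {p | p.1 ∈ V ∧ p.2 ∈ F p.1}

/-- The graph of the complement mapping `F_{W,Z}`, namely
`G(F|_{X∖W}) ∩ compl(Z)`. -/
def complMapGraph {X Y : Type*} (G : SimpleGraph X) (F : X → Set Y) (W : Set X)
    (Z : Set (X × Y)) : Set (X × Y) :=
  svGraphOn F Wᶜ ∩ dispCompl G Z

/-- The graph `{(x, s x) : x ∈ V}` of the restriction of a point-valued map `s` to `V`. -/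
def selGraphOn {X Y : Type*} (s : X → Y) (V : Set X) : Set (X × Y) :=
  {p | p.1 ∈ V ∧ p.2 = s p.1}

/-- `size(S)`: the maximum cardinality of a disparate subset of `S`. -/
noncomputable def dispSize {X Y : Type*} (G : SimpleGraph X) (S : Set (X × Y)) : ℕ :=
  sSup {n | ∃ A ⊆ S, DisparateSet G A ∧ A.ncard = n}

/-- The graph `(X, E)` is transitive. -/
def GraphTransitive {X : Type*} (G : SimpleGraph X) : Prop :=
  ∀ ⦃x x' x'' : X⦄, G.Adj x x' → G.Adj x' x'' → x ≠ x'' → G.Adj x x''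

/-- `F` admits a disparate selection `s` with `s x = y` iff the complement mapping
`F_{{x},{(x,y)}}` admits a disparate selection (a map defined on `X ∖ {x}`). -/
theorem disparate_selection_through_point_iff {X Y : Type*} [Fintype X] [Fintype Y]
    (G : SimpleGraph X) (F : X → Set Y) (x : X) (y : Y) (hy : y ∈ F x) :
    (∃ s : X → Y, (∀ z, s z ∈ F z) ∧ DisparateSet G (selGraphOn s Set.univ) ∧ s x = y) ↔
      (∃ s' : X → Y, (∀ z, z ≠ x → (z, s' z) ∈ complMapGraph G F {x} {(x, y)}) ∧
        DisparateSet G (selGraphOn s' ({x} : Set X)ᶜ)) := by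
  classical
  have symm : ∀ a b : X × Y, Disparate G a b → Disparate G b a := by
    rintro a b ⟨h1, h2⟩
    exact ⟨h1.symm, fun he hadj => h2 he.symm hadj.symm⟩
  constructor
  · rintro ⟨s, hs, hd, hsx⟩
    refine ⟨s, ?_, ?_⟩
    · intro z hz
      refine ⟨⟨hz, hs z⟩, ?_⟩
      rintro a' (rfl : a' = (x, y))
      have : (z, s z) ≠ (x, y) := by
        intro h; exact hz (congrArg Prod.fst h)
      have := hd (z, s z) ⟨trivial, rfl⟩ (x, y) ⟨trivial, hsx.symm⟩ this
      exact this
    · intro a ha b hb hab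
      exact hd a ⟨trivial, ha.2⟩ b ⟨trivial, hb.2⟩ hab
  · rintro ⟨s', hs', hd⟩
    refine ⟨fun z => if z = x then y else s' z, ?_, ?_, by simp⟩
    · intro z
      by_cases hz : z = x
      · subst hz; simpa using hy
      · simpa [hz] using (hs' z hz).1.2
    · rintro ⟨a1, a2⟩ ⟨-, (ha : a2 = _)⟩ ⟨b1, b2⟩ ⟨-, (hb : b2 = _)⟩ hab
      by_cases ha1 : a1 = x <;> by_cases hb1 : b1 = x
      · exact absurd (by subst ha1; subst hb1; simp_all) hab
      · -- a = (x,y), b = (b1, s' b1)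
        simp only [if_pos ha1] at ha
        simp only [if_neg hb1] at hb
        have d := symm _ _ ((hs' b1 hb1).2 (x, y) rfl)
        rw [show ((a1, a2) : X × Y) = (x, y) from by rw [ha1, ha]]
        exact hb ▸ d
      · simp only [if_pos hb1] at hb
        simp only [if_neg ha1] at ha
        have d := (hs' a1 ha1).2 (x, y) rfl
        rw [show ((b1, b2) : X × Y) = (x, y) from by rw [hb1, hb]]
        exact ha ▸ d
      · simp only [if_neg ha1, if_neg hb1] at ha hb
        subst ha; subst hb
        exact hd _ ⟨by simp [ha1], rfl⟩ _ ⟨by simp [hb1], rfl⟩ hab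
end

section
/- Let W ⊆ X be nonempty, let Z ⊆ G(F|_W), and let s be a selection of F such that: s|_W is disparate, the graph of s|_W is contained in Z, s|_{X∖W} is disparate, and s|_{X∖W} is a selection of the complement mapping F_{W,Z}. Then s is a disparate selection of F. -/
open Set

/-- If `s|_W` is disparate with graph inside `Z`, and `s|_{X∖W}` is a disparate
selection of the complement mapping `F_{W,Z}`, then `s` is a disparate selection of `F`. -/
theorem disparate_selection_glue {X Y : Type*} [Fintype X] [Fintype Y]
    (G : SimpleGraph X) (F : X → Set Y) (W : Set X) (hW : W.Nonempty)
    (Z : Set (X × Y)) (hZ : Z ⊆ svGraphOn F W)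
    (s : X → Y) (hsel : ∀ x, s x ∈ F x)
    (h1 : DisparateSet G (selGraphOn s W))
    (h2 : selGraphOn s W ⊆ Z)
    (h3 : DisparateSet G (selGraphOn s Wᶜ))
    (h4 : ∀ x ∉ W, (x, s x) ∈ complMapGraph G F W Z) :
    DisparateSet G (selGraphOn s Set.univ) := by
  have symm : ∀ a b : X × Y, Disparate G a b → Disparate G b a := by
    rintro a b ⟨hne, hadj⟩
    exact ⟨hne.symm, fun h => fun hab => hadj h.symm hab.symm⟩
  rintro ⟨x, y⟩ ⟨-, hy⟩ ⟨x', y'⟩ ⟨-, hy'⟩ hne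
  simp only at hy hy'
  subst hy; subst hy'
  by_cases hx : x ∈ W <;> by_cases hx' : x' ∈ W
  · exact h1 _ ⟨hx, rfl⟩ _ ⟨hx', rfl⟩ hne
  · exact symm _ _ ((h4 x' hx').2 _ (h2 ⟨hx, rfl⟩))
  · exact (h4 x hx).2 _ (h2 ⟨hx', rfl⟩)
  · exact h3 _ ⟨Set.mem_compl hx, rfl⟩ _ ⟨Set.mem_compl hx', rfl⟩ hne
end

section
/- Let (X,E) be transitive, let A ⊆ X × Y be a disparate set and let b ∈ X × Y. Then #(A ∩ hull({b})) ≤ 1. -/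
open Set

/-- On a transitive graph, a disparate set meets the hull of a singleton in at most
one point. -/
theorem disparate_inter_hull_singleton {X Y : Type*} [Fintype X] [Fintype Y]
    (G : SimpleGraph X) (hG : GraphTransitive G)
    (A : Set (X × Y)) (hA : DisparateSet G A) (b : X × Y) :
    (A ∩ dispHull G {b}).ncard ≤ 1 := by
  have hsub : (A ∩ dispHull G {b}).Subsingleton := by
    rintro a ⟨haA, a', ha', hna⟩ c ⟨hcA, c', hc', hnc⟩
    rw [mem_singleton_iff] at ha' hc'
    rw [ha'] at hna
    rw [hc'] at hnc
    by_contra hne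
    have hd := hA a haA c hcA hne
    -- unpack non-disparateness with b
    have ha : a = b ∨ (a.2 = b.2 ∧ G.Adj a.1 b.1) := by
      by_cases h : a = b
      · exact Or.inl h
      · right
        simp only [Disparate, not_and, not_forall, not_not] at hna
        obtain ⟨h2, h3⟩ := hna h
        exact ⟨h2, h3⟩
    have hc : c = b ∨ (c.2 = b.2 ∧ G.Adj c.1 b.1) := by
      by_cases h : c = b
      · exact Or.inl h
      · right
        simp only [Disparate, not_and, not_forall, not_not] at hnc
        obtain ⟨h2, h3⟩ := hnc h
        exact ⟨h2, h3⟩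
    rcases ha with rfl | ⟨ha2, haadj⟩
    · rcases hc with rfl | ⟨hc2, hcadj⟩
      · exact hne rfl
      · exact hd.2 hc2.symm hcadj.symm
    · rcases hc with rfl | ⟨hc2, hcadj⟩
      · exact hd.2 ha2 haadj
      · have h2 : a.2 = c.2 := ha2.trans hc2.symm
        have h1 : a.1 ≠ c.1 := fun h => hne (Prod.ext h h2)
        exact hd.2 h2 (hG haadj hcadj.symm h1)
  exact (Set.ncard_le_one_iff (Set.toFinite _)).mpr fun h h' => hsub h h'
end

section
/- Let (X,E) be transitive, let W ⊆ X be nonempty and let (x,y) ∈ (X∖W) × Y. Then size(G(F|_W)) ≤ size(G((F_{{x},{(x,y)}})|_W)) + 1. -/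
open Set

/-- On a transitive graph, removing one point `(x,y)` outside `W` via the complement
mapping decreases the size of the restricted graph by at most one. -/
theorem size_le_size_complMap_add_one {X Y : Type*} [Fintype X] [Fintype Y]
    (G : SimpleGraph X) (hG : GraphTransitive G) (F : X → Set Y)
    (W : Set X) (hW : W.Nonempty) (x : X) (hx : x ∉ W) (y : Y) :
    dispSize G (svGraphOn F W) ≤
      dispSize G (complMapGraph G F {x} {(x, y)} ∩ {p : X × Y | p.1 ∈ W}) + 1 := by
  classical
  set T := complMapGraph G F {x} {(x, y)} ∩ {p : X × Y | p.1 ∈ W} with hT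
  have hbdd : BddAbove {n | ∃ A ⊆ T, DisparateSet G A ∧ A.ncard = n} := by
    refine ⟨(Set.univ : Set (X × Y)).ncard, ?_⟩
    rintro n ⟨A, -, -, rfl⟩
    exact Set.ncard_le_ncard (Set.subset_univ A) (Set.toFinite _)
  have hne : (0:ℕ) ∈ {n | ∃ A ⊆ svGraphOn F W, DisparateSet G A ∧ A.ncard = n} :=
    ⟨∅, Set.empty_subset _, fun a ha => absurd ha (Set.notMem_empty a), Set.ncard_empty _⟩
  refine csSup_le ⟨0, hne⟩ ?_
  rintro n ⟨A, hAS, hAdisp, rfl⟩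
  -- bad points of A: second coord y and adjacent to x
  set B : Set (X × Y) := {a ∈ A | a.2 = y ∧ G.Adj a.1 x} with hB
  have hBsub : B ⊆ A := fun a ha => ha.1
  have hBsubsing : B.Subsingleton := by
    intro a ha b hb
    by_contra hab
    have hdisp := hAdisp a (hBsub ha) b (hBsub hb) hab
    have h2 : a.2 = b.2 := ha.2.1.trans hb.2.1.symm
    have hne1 : a.1 ≠ b.1 := by
      intro h1
      exact hab (Prod.ext h1 h2)
    exact hdisp.2 h2 (hG ha.2.2 hb.2.2.symm hne1)
  have hBcard : B.ncard ≤ 1 := by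
    rcases B.eq_empty_or_nonempty with h | ⟨b, hb⟩
    · simp [h]
    · have : B = {b} := hBsubsing.eq_singleton_of_mem hb
      simp [this]
  have hsub : A \ B ⊆ T := by
    rintro a ⟨haA, haB⟩
    have haS := hAS haA
    have ha1 : a.1 ∈ W := haS.1
    have hax : a.1 ≠ x := fun h => hx (h ▸ ha1)
    refine ⟨⟨⟨by simpa using hax, haS.2⟩, ?_⟩, ha1⟩
    rintro a' (rfl : a' = (x, y))
    refine ⟨fun h => hax (by rw [h]), fun h2 hadj => ?_⟩
    exact haB ⟨haA, h2, hadj⟩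
  have hmem : (A \ B).ncard ∈ {n | ∃ A ⊆ T, DisparateSet G A ∧ A.ncard = n} := by
    refine ⟨A \ B, hsub, ?_, rfl⟩
    intro a ha b hb hab
    exact hAdisp a ha.1 b hb.1 hab
  have hle : (A \ B).ncard ≤ dispSize G T := le_csSup hbdd hmem
  have hdiff : (A \ B).ncard = A.ncard - B.ncard :=
    Set.ncard_diff hBsub (Set.toFinite _)
  omega
end

section
/- Let (X,E) be transitive, let G ⊆ X × Y and let A ⊆ hull(G) be a disparate set with A∖G ≠ ∅. Then there exist a ∈ A∖G and g ∈ G∖A such that (A∖{a}) ∪ {g} is a disparate set. -/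
open Set

/-- Exchange lemma: on a transitive graph, a disparate subset of `hull(S)` not
contained in `S` can exchange a point outside `S` for a point of `S`. -/
theorem disparate_exchange {X Y : Type*} [Fintype X] [Fintype Y]
    (G : SimpleGraph X) (hG : GraphTransitive G)
    (S : Set (X × Y)) (A : Set (X × Y)) (hA : A ⊆ dispHull G S)
    (hdisp : DisparateSet G A) (hne : (A \ S).Nonempty) :
    ∃ a ∈ A \ S, ∃ g ∈ S \ A, DisparateSet G (A \ {a} ∪ {g}) := by
  obtain ⟨a, haA, haS⟩ := hne
  obtain ⟨g, hgS, hnd⟩ := hA haA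
  have hag : a ≠ g := fun h => haS (h ▸ hgS)
  simp only [Disparate, not_and, not_forall, not_not] at hnd
  obtain ⟨hy, hadj⟩ := hnd fun h => (hag h).elim
  have hgA : g ∉ A := fun hgA => (hdisp a haA g hgA hag).2 hy hadj
  refine ⟨a, ⟨haA, haS⟩, g, ⟨hgS, hgA⟩, ?_⟩
  intro p hp q hq hpq
  rcases hp with ⟨hpA, hpa⟩ | hp
  · rcases hq with ⟨hqA, hqa⟩ | hq
    · exact hdisp p hpA q hqA hpq
    · have hq' : q = g := hq
      subst hq'
      refine ⟨hpq, fun hy2 hadj2 => ?_⟩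
      have hpa' : p ≠ a := hpa
      have hy3 : p.2 = a.2 := hy2.trans hy.symm
      have h1 : p.1 ≠ a.1 := fun h => hpa' (Prod.ext h hy3)
      exact (hdisp p hpA a haA hpa').2 hy3 (hG hadj2 hadj.symm h1)
  · have hp' : p = g := hp
    subst hp'
    rcases hq with ⟨hqA, hqa⟩ | hq
    · refine ⟨hpq, fun hy2 hadj2 => ?_⟩
      have hqa' : q ≠ a := hqa
      have hy3 : q.2 = a.2 := hy2.symm.trans hy.symm
      have h1 : q.1 ≠ a.1 := fun h => hqa' (Prod.ext h hy3)
      exact (hdisp q hqA a haA hqa').2 hy3 (hG hadj2.symm hadj.symm h1)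
    · exact absurd (hq : q ∈ ({p} : Set (X × Y))) hpq.symm
end

section
/- Let (X,E) be transitive and let G ⊆ X × Y. Then size(G) = size(hull(G)). -/
open Set

lemma notDisp_iff {X Y : Type*} (G : SimpleGraph X) (a b : X × Y) :
    ¬ Disparate G a b ↔ a.2 = b.2 ∧ (a.1 = b.1 ∨ G.Adj a.1 b.1) := by
  unfold Disparate
  constructor
  · intro h
    by_cases hab : a = b
    · subst hab; exact ⟨rfl, Or.inl rfl⟩
    · push_neg at h
      obtain ⟨h2, hadj⟩ := h hab
      exact ⟨h2, Or.inr hadj⟩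
  · rintro ⟨h2, h1 | hadj⟩
    · intro h; exact h.1 (Prod.ext h1 h2)
    · rintro ⟨hne, h⟩; exact h h2 hadj

lemma Rtrans {X : Type*} {G : SimpleGraph X} (hG : GraphTransitive G) {x y z : X}
    (h1 : x = y ∨ G.Adj x y) (h2 : y = z ∨ G.Adj y z) : x = z ∨ G.Adj x z := by
  rcases h1 with rfl | h1
  · exact h2
  rcases h2 with rfl | h2
  · exact Or.inr h1
  by_cases hxz : x = z
  · exact Or.inl hxz
  · exact Or.inr (hG h1 h2 hxz)

lemma Rsymm {X : Type*} {G : SimpleGraph X} {x y : X}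
    (h : x = y ∨ G.Adj x y) : y = x ∨ G.Adj y x := by
  rcases h with rfl | h
  · exact Or.inl rfl
  · exact Or.inr h.symm

/-- On a transitive graph, a set and its hull have the same size. -/
theorem size_hull_eq {X Y : Type*} [Fintype X] [Fintype Y]
    (G : SimpleGraph X) (hG : GraphTransitive G) (S : Set (X × Y)) :
    dispSize G S = dispSize G (dispHull G S) := by
  classical
  have hsub : S ⊆ dispHull G S := fun a ha => ⟨a, ha, fun h => h.1 rfl⟩
  have hbdd : ∀ (T : Set (X × Y)),
      BddAbove {n | ∃ A ⊆ T, DisparateSet G A ∧ A.ncard = n} := by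
    intro T
    refine ⟨Fintype.card (X × Y), ?_⟩
    rintro n ⟨A, hA, -, rfl⟩
    calc A.ncard ≤ (Set.univ : Set (X × Y)).ncard :=
          Set.ncard_le_ncard (Set.subset_univ A) Set.finite_univ
      _ = Fintype.card (X × Y) := by simp [Set.ncard_univ, Nat.card_eq_fintype_card]
  have hne : ∀ (T : Set (X × Y)),
      ({n | ∃ A ⊆ T, DisparateSet G A ∧ A.ncard = n}).Nonempty := by
    intro T
    exact ⟨0, ∅, Set.empty_subset T,
      fun a ha => absurd ha (Set.notMem_empty a), by simp⟩
  unfold dispSize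
  apply le_antisymm
  · apply csSup_le_csSup (hbdd _) (hne _)
    rintro n ⟨A, hA, hdisp, rfl⟩
    exact ⟨A, fun a ha => hsub (hA ha), hdisp, rfl⟩
  · apply csSup_le (hne _)
    rintro n ⟨A, hA, hdisp, rfl⟩
    have hA' : ∀ a : X × Y, ∃ b, a ∈ A → b ∈ S ∧ ¬ Disparate G a b := by
      intro a
      by_cases ha : a ∈ A
      · obtain ⟨b, hbS, hbd⟩ := hA ha
        exact ⟨b, fun _ => ⟨hbS, hbd⟩⟩
      · exact ⟨a, fun h => absurd h ha⟩
    choose f hf using hA'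
    have hkey : ∀ a ∈ A, ∀ b ∈ A, a ≠ b → Disparate G (f a) (f b) := by
      intro a ha b hb hab
      have ha' := (hf a ha).2
      have hb' := (hf b hb).2
      by_contra hcon
      rw [notDisp_iff] at ha' hb' hcon
      refine absurd (hdisp a ha b hb hab) ?_
      rw [notDisp_iff]
      refine ⟨ha'.1.trans (hcon.1.trans hb'.1.symm), ?_⟩
      exact Rtrans hG ha'.2 (Rtrans hG hcon.2 (Rsymm hb'.2))
    have hinj : Set.InjOn f A := by
      intro a ha b hb hfab
      by_contra hab
      exact (hkey a ha b hb hab).1 hfab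
    refine le_csSup (hbdd _) ⟨f '' A, ?_, ?_, ?_⟩
    · rintro p ⟨a, ha, rfl⟩
      exact (hf a ha).1
    · rintro p ⟨a, ha, rfl⟩ q ⟨b, hb, rfl⟩ hpq
      exact hkey a ha b hb (fun h => hpq (by rw [h]))
    · exact Set.ncard_image_of_injOn hinj
end

section
/- Let (X,E) be transitive. Then F admits a Hall collection if and only if F admits a disparate selection. Equivalently, there exists a selection s of F whose graph is a disparate set if and only if for every nonempty subset W ⊆ X there is a disparate subset A ⊆ G(F|_W) with #A ≥ #W. -/
open Set

/-- On a transitive graph, `F` admits a disparate selection iff `F` admits a Hall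
collection, i.e. iff every nonempty `W ⊆ X` carries a disparate subset of
`G(F|_W)` of cardinality at least `#W`. -/
theorem disparate_selection_iff_Hall_collection {X Y : Type*} [Fintype X] [Fintype Y]
    (G : SimpleGraph X) (hG : GraphTransitive G) (F : X → Set Y) :
    (∃ s : X → Y, (∀ x, s x ∈ F x) ∧ DisparateSet G (selGraphOn s Set.univ)) ↔
      (∀ W : Set X, W.Nonempty →
        ∃ A ⊆ svGraphOn F W, DisparateSet G A ∧ W.ncard ≤ A.ncard) := by
  classical
  constructor
  · rintro ⟨s, hs, hd⟩ W hW
    refine ⟨selGraphOn s W, ?_, ?_, ?_⟩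
    · rintro ⟨x, y⟩ ⟨hx, hy⟩
      exact ⟨hx, hy ▸ hs x⟩
    · intro a ha b hb hab
      exact hd a ⟨trivial, ha.2⟩ b ⟨trivial, hb.2⟩ hab
    · have himg : selGraphOn s W = (fun x => (x, s x)) '' W := by
        ext ⟨x, y⟩
        constructor
        · rintro ⟨hx, hy⟩; exact ⟨x, hx, Prod.ext rfl hy.symm⟩
        · rintro ⟨x', hx', h⟩
          obtain ⟨h1, h2⟩ := Prod.mk.injEq .. ▸ h
          exact ⟨h1 ▸ hx', by simp [← h1, ← h2]⟩
      rw [himg, Set.ncard_image_of_injective _ (fun a b h => congrArg Prod.fst h)]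
  · intro h
    have hequiv : Equivalence (fun x x' : X => x = x' ∨ G.Adj x x') := by
      constructor
      · intro x; exact Or.inl rfl
      · rintro x y (rfl | hxy); · exact Or.inl rfl
        · exact Or.inr hxy.symm
      · rintro x y z (rfl | hxy) (rfl | hyz)
        · exact Or.inl rfl
        · exact Or.inr hyz
        · exact Or.inr hxy
        · by_cases hxz : x = z
          · exact Or.inl hxz
          · exact Or.inr (hG hxy hyz hxz)
    let st : Setoid X := ⟨_, hequiv⟩
    let t : X → Finset (Quotient st × Y) :=
      fun x => ({Quotient.mk st x} : Finset (Quotient st)) ×ˢ (F x).toFinset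
    have hall : ∀ S : Finset X, S.card ≤ (S.biUnion t).card := by
      intro S
      rcases S.eq_empty_or_nonempty with rfl | hS
      · simp
      obtain ⟨A, hAsub, hAdisp, hcard⟩ := h (S : Set X) (by exact_mod_cast hS)
      set φ : X × Y → Quotient st × Y := fun p => (Quotient.mk st p.1, p.2) with hφ
      have hinj : Set.InjOn φ A := by
        intro p hp q hq hpq
        obtain ⟨h1, h2⟩ := Prod.mk.injEq .. ▸ hpq
        by_contra hne
        rcases Quotient.exact h1 with heq | hadj
        · exact hne (Prod.ext heq h2)
        · exact (hAdisp p hp q hq hne).2 h2 hadj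
      have himg : φ '' A ⊆ (S.biUnion t : Finset (Quotient st × Y)) := by
        rintro _ ⟨p, hp, rfl⟩
        obtain ⟨hx, hy⟩ := hAsub hp
        refine Finset.mem_coe.mpr (Finset.mem_biUnion.mpr ⟨p.1, by exact_mod_cast hx, ?_⟩)
        simp [t, φ, hy]
      calc S.card = (S : Set X).ncard := (Set.ncard_coe_finset S).symm
        _ ≤ A.ncard := hcard
        _ = (φ '' A).ncard := (Set.ncard_image_of_injOn hinj).symm
        _ ≤ ((S.biUnion t : Finset (Quotient st × Y)) : Set (Quotient st × Y)).ncard :=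
            Set.ncard_le_ncard himg (Set.toFinite _)
        _ = (S.biUnion t).card := Set.ncard_coe_finset _
    obtain ⟨f, hfinj, hft⟩ := (Finset.all_card_le_biUnion_card_iff_exists_injective t).mp hall
    have hfst : ∀ x, (f x).1 = Quotient.mk st x := by
      intro x
      have := hft x
      simp only [t, Finset.mem_product, Finset.mem_singleton] at this
      exact this.1
    have hsnd : ∀ x, (f x).2 ∈ F x := by
      intro x
      have := hft x
      simp only [t, Finset.mem_product, Set.mem_toFinset] at this
      exact this.2
    refine ⟨fun x => (f x).2, hsnd, ?_⟩
    rintro a ⟨-, ha⟩ b ⟨-, hb⟩ hab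
    refine ⟨hab, fun h2 hadj => ?_⟩
    have hx : a.1 ≠ b.1 := fun hx => (hx ▸ hadj).ne rfl
    apply hx
    apply hfinj
    apply Prod.ext
    · rw [hfst, hfst]
      exact Quotient.sound (Or.inr hadj)
    · exact ha.symm.trans (h2.trans hb)
end

section
/- In Ryser's model, F admits a Hall collection if and only if N(v) ≥ r + s − n for every value v ∈ {1,…,n}. -/
open Set

/-- The graph of Ryser's model: vertices are pairs `(v, ρ)` where the value `v` does
not occur in row `ρ` of the array `L`; two vertices are adjacent iff they carry the
same value and distinct rows. -/
def ryserGraph (n r s : ℕ) (L : Fin r → Fin s → Fin n) :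
    SimpleGraph {p : Fin n × Fin r // ∀ j, L p.2 j ≠ p.1} where
  Adj a b := a.val.1 = b.val.1 ∧ a.val.2 ≠ b.val.2
  symm := ⟨fun a b h => ⟨h.1.symm, h.2.symm⟩⟩
  loopless := ⟨fun a h => h.2 rfl⟩



lemma cardY_eq (n s : ℕ) (hsn : s ≤ n) :
    Fintype.card {c : Fin n // s ≤ (c : ℕ)} = n - s := by
  have e : {c : Fin n // s ≤ (c : ℕ)} ≃ Fin (n - s) :=
    { toFun := fun c => ⟨(c : ℕ) - s, by have := c.1.2; have := c.2; omega⟩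
      invFun := fun k => ⟨⟨s + k.1, by have := k.2; omega⟩, by simp⟩
      left_inv := fun c => by
        ext; simp; have := c.2; omega
      right_inv := fun k => by
        ext; simp }
  rw [Fintype.card_congr e, Fintype.card_fin]

lemma key_count (n r s : ℕ) (L : Fin r → Fin s → Fin n)
    (hrow : ∀ i, Function.Injective (L i)) (v : Fin n) :
    {p : Fin r × Fin s | L p.1 p.2 = v}.ncard
      + (Finset.univ.filter fun i : Fin r => ∀ j, L i j ≠ v).card = r := by
  classical
  set A : Finset (Fin r × Fin s) := Finset.univ.filter (fun p => L p.1 p.2 = v) with hA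
  have h1 : {p : Fin r × Fin s | L p.1 p.2 = v}.ncard = A.card := by
    rw [← Set.ncard_coe_finset]
    congr 1
    ext p
    simp [hA]
  have hinj : Set.InjOn Prod.fst (A : Set (Fin r × Fin s)) := by
    intro p hp q hq hpq
    simp [hA] at hp hq
    have : p.2 = q.2 := hrow p.1 (by rw [hp, hpq, hq])
    exact Prod.ext hpq this
  have h2 : (A.image Prod.fst).card = A.card :=
    Finset.card_image_of_injOn hinj
  have h3 : A.image Prod.fst = Finset.univ.filter (fun i => ∃ j, L i j = v) := by
    ext i
    simp [hA]
  have h4 := Finset.card_filter_add_card_filter_not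
    (s := (Finset.univ : Finset (Fin r))) (p := fun i => ∃ j, L i j = v)
  have h5 : (Finset.univ.filter fun i : Fin r => ¬ ∃ j, L i j = v)
      = Finset.univ.filter fun i : Fin r => ∀ j, L i j ≠ v := by
    ext i; simp
  rw [h1, ← h2, h3]
  rw [h5] at h4
  simpa using h4

/-- In Ryser's model (with `Y = {s+1,…,n}`, i.e. the columns of index `≥ s`, and
`F ≡ Y`), `F` admits a Hall collection iff `N(v) ≥ r + s − n` for every value `v`. -/
theorem ryser_hall_collection_iff (n r s : ℕ) (hn : 0 < n) (hr : 0 < r) (hs : 0 < s)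
    (hrn : r ≤ n) (hsn : s ≤ n)
    (L : Fin r → Fin s → Fin n)
    (hrow : ∀ i, Function.Injective (L i))
    (hcol : ∀ j, Function.Injective fun i => L i j) :
    (∀ V : Set {p : Fin n × Fin r // ∀ j, L p.2 j ≠ p.1}, V.Nonempty →
        ∃ A ⊆ V ×ˢ (Set.univ : Set {c : Fin n // s ≤ (c : ℕ)}),
          DisparateSet (ryserGraph n r s L) A ∧ V.ncard ≤ A.ncard) ↔
      (∀ v : Fin n,
        (r : ℤ) + s - n ≤ {p : Fin r × Fin s | L p.1 p.2 = v}.ncard) := by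
  classical
  set X := {p : Fin n × Fin r // ∀ j, L p.2 j ≠ p.1} with hX
  set Y := {c : Fin n // s ≤ (c : ℕ)} with hY
  have hcY : Fintype.card Y = n - s := cardY_eq n s hsn
  constructor
  · -- Hall ⇒ condition
    intro H v
    have hk := key_count n r s L hrow v
    set Rv := Finset.univ.filter fun i : Fin r => ∀ j, L i j ≠ v with hRv
    rcases Rv.eq_empty_or_nonempty with hE | ⟨ρ, hρ⟩
    · rw [hE] at hk
      simp at hk
      push_cast [hk]
      omega
    · simp only [hRv, Finset.mem_filter] at hρ
      set V : Set X := {x : X | x.val.1 = v} with hV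
      have hVne : V.Nonempty := ⟨⟨(v, ρ), hρ.2⟩, rfl⟩
      obtain ⟨A, hAsub, hAdisp, hcard⟩ := H V hVne
      -- V.ncard = Rv.card
      have hVinj : Set.InjOn (fun x : X => x.val.2) V := by
        intro x hx y hy hxy
        have hxv : x.val.1 = v := hx
        have hyv : y.val.1 = v := hy
        apply Subtype.ext
        apply Prod.ext
        · rw [hxv, hyv]
        · exact hxy
      have hVim : (fun x : X => x.val.2) '' V = (Rv : Set (Fin r)) := by
        ext i
        simp only [Set.mem_image, hRv, Finset.coe_filter, Set.mem_setOf_eq,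
          Finset.mem_univ, true_and]
        constructor
        · rintro ⟨x, hx, rfl⟩
          have hxv : x.val.1 = v := hx
          intro j
          rw [← hxv]
          exact x.prop j
        · intro hi
          exact ⟨⟨(v, i), hi⟩, rfl, rfl⟩
      have hVcard : V.ncard = Rv.card := by
        rw [← Set.ncard_image_of_injOn hVinj, hVim, Set.ncard_coe_finset]
      -- A.ncard ≤ n - s
      have hAinj : Set.InjOn Prod.snd A := by
        intro p hp q hq hpq
        by_contra hne
        have hd := hAdisp p hp q hq hne
        have hnadj := hd.2 hpq
        have hpv : p.1.val.1 = v := (hAsub hp).1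
        have hqv : q.1.val.1 = v := (hAsub hq).1
        have h1 : p.1 ≠ q.1 := by
          intro h
          exact hne (Prod.ext h hpq)
        have h2 : p.1.val.2 ≠ q.1.val.2 := by
          intro h
          apply h1
          exact Subtype.ext (Prod.ext (hpv.trans hqv.symm) h)
        exact hnadj ⟨hpv.trans hqv.symm, h2⟩
      have hAle : A.ncard ≤ n - s := by
        have := Set.ncard_image_of_injOn hAinj
        calc A.ncard = (Prod.snd '' A).ncard := this.symm
          _ ≤ (Set.univ : Set Y).ncard :=
              Set.ncard_le_ncard (Set.subset_univ _) (Set.toFinite _)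
          _ = n - s := by rw [Set.ncard_univ, Nat.card_eq_fintype_card, hcY]
      have : Rv.card ≤ n - s := hVcard ▸ le_trans hcard hAle
      push_cast [← hk]
      omega
  · -- condition ⇒ Hall
    intro H V hVne
    have hRle : ∀ v : Fin n,
        (Finset.univ.filter fun i : Fin r => ∀ j, L i j ≠ v).card ≤ n - s := by
      intro v
      have h1 := H v
      have h2 := key_count n r s L hrow v
      omega
    have hEmb : ∀ v : Fin n,
        Nonempty ({ρ : Fin r // ∀ j, L ρ j ≠ v} ↪ Y) := by
      intro v
      apply Function.Embedding.nonempty_of_card_le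
      rw [hcY, Fintype.card_subtype]
      exact hRle v
    have e : ∀ v : Fin n, {ρ : Fin r // ∀ j, L ρ j ≠ v} ↪ Y :=
      fun v => (hEmb v).some
    set h : X → Y := fun x => e x.val.1 ⟨x.val.2, x.prop⟩ with hh
    refine ⟨(fun x => (x, h x)) '' V, ?_, ?_, ?_⟩
    · rintro ⟨x, y⟩ ⟨x', hx', heq⟩
      obtain ⟨rfl, rfl⟩ := Prod.mk.injEq .. ▸ heq
      exact ⟨hx', Set.mem_univ _⟩
    · rintro a ⟨x, hxV, rfl⟩ b ⟨x', hx'V, rfl⟩ hne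
      refine ⟨hne, fun hy hadj => ?_⟩
      obtain ⟨hv, hρ⟩ := hadj
      have hxx' : x ≠ x' := fun h => hne (by rw [h])
      obtain ⟨⟨v, ρ⟩, hx⟩ := x
      obtain ⟨⟨v', ρ'⟩, hx'⟩ := x'
      simp only at hv hρ
      subst hv
      have : (⟨ρ, hx⟩ : {ρ : Fin r // ∀ j, L ρ j ≠ v}) = ⟨ρ', hx'⟩ :=
        (e v).injective hy
      exact hρ (congrArg Subtype.val this)
    · rw [Set.ncard_image_of_injective V
        (fun a b hab => congrArg Prod.fst hab)]
end

section
/- (Ryser's theorem.) Let L be an r × s array with entries in {1,…,n} (r ≤ n, s ≤ n) whose values in each row and in each column are distinct. Then L can be extended to an r × n array with entries in {1,…,n} whose values in each row and in each column are distinct (agreeing with L on the first s columns) if and only if N(v) ≥ r + s − n for every v ∈ {1,…,n}. -/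
open Set

open Finset
namespace RyserAux
variable {n r s : ℕ}
def miss (L : Fin r → Fin s → Fin n) (i : Fin r) : Finset (Fin n) :=
  univ.filter (fun v => ∀ j, L i j ≠ v)
def dcount (L : Fin r → Fin s → Fin n) (v : Fin n) : ℕ :=
  (univ.filter (fun i => v ∈ miss L i)).card
lemma card_miss (L : Fin r → Fin s → Fin n) (hsn : s ≤ n)
    (hrow : ∀ i, Function.Injective (L i)) (i : Fin r) :
    (miss L i).card = n - s := by
  have h1 : (univ.filter (fun v => ¬ ∀ j, L i j ≠ v)) = Finset.image (L i) Finset.univ := by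
    ext v; simp [eq_comm]
  have h2 := Finset.card_filter_add_card_filter_not
    (s := (univ : Finset (Fin n))) (fun v => ∀ j, L i j ≠ v)
  rw [h1, Finset.card_image_of_injective _ (hrow i)] at h2
  simp only [card_univ, Fintype.card_fin] at h2
  simp only [miss]; omega
lemma sum_dcount (L : Fin r → Fin s → Fin n) (hsn : s ≤ n)
    (hrow : ∀ i, Function.Injective (L i)) :
    ∑ v : Fin n, dcount L v = r * (n - s) := by
  unfold dcount
  have h : ∀ v : Fin n, (univ.filter (fun i => v ∈ miss L i)).card
      = ∑ i : Fin r, if v ∈ miss L i then 1 else 0 := fun v => Finset.card_filter _ _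
  simp_rw [h]
  rw [Finset.sum_comm]
  have h2 : ∀ i : Fin r, (∑ v : Fin n, if v ∈ miss L i then 1 else 0) = n - s := by
    intro i
    rw [← Finset.card_filter,
      show (univ.filter (fun v => v ∈ miss L i)) = miss L i by simp [miss]]
    exact card_miss L hsn hrow i
  simp_rw [h2]; simp [mul_comm]

lemma step (hrn : r ≤ n) (hsn : s < n)
    (L : Fin r → Fin s → Fin n)
    (hrow : ∀ i, Function.Injective (L i))
    (hcol : ∀ j, Function.Injective fun i => L i j)
    (hd : ∀ v, dcount L v ≤ n - s) :
    ∃ L' : Fin r → Fin (s+1) → Fin n,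
      (∀ i, Function.Injective (L' i)) ∧
      (∀ j, Function.Injective fun i => L' i j) ∧
      (∀ v, dcount L' v ≤ n - (s+1)) ∧
      (∀ i (j : Fin s), L' i ⟨j.1, by omega⟩ = L i j) := by
  set Δ := n - s with hΔdef
  have hΔ : 0 < Δ := by omega
  classical
  -- Hall system
  set t : (Fin r ⊕ Fin (n - r)) → Finset (Fin n) := fun x =>
    match x with
    | Sum.inl i => miss L i
    | Sum.inr _ => univ.filter (fun v => dcount L v < Δ) with ht
  have hall : ∀ S : Finset (Fin r ⊕ Fin (n - r)), S.card ≤ (S.biUnion t).card := by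
    intro S
    set A : Finset (Fin r) := univ.filter (fun i => Sum.inl i ∈ S) with hA
    set NA : Finset (Fin n) := A.biUnion (miss L) with hNA
    have hNAsub : NA ⊆ S.biUnion t := by
      intro v hv
      rw [hNA, Finset.mem_biUnion] at hv
      obtain ⟨i, hi, hvi⟩ := hv
      rw [hA, Finset.mem_filter] at hi
      exact Finset.mem_biUnion.2 ⟨Sum.inl i, hi.2, hvi⟩
    have hav0 : ∀ v : Fin n, v ∉ NA → (A.filter (fun i => v ∈ miss L i)).card = 0 := by
      intro v hv
      rw [Finset.card_eq_zero]
      rw [Finset.eq_empty_iff_forall_notMem]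
      intro i hi
      rw [Finset.mem_filter] at hi
      exact hv (Finset.mem_biUnion.2 ⟨i, hi.1, hi.2⟩)
    have hav_le : ∀ v : Fin n, (A.filter (fun i => v ∈ miss L i)).card ≤ dcount L v := by
      intro v
      exact Finset.card_le_card (Finset.filter_subset_filter _ (Finset.subset_univ A))
    have hsum : ∑ v : Fin n, (A.filter (fun i => v ∈ miss L i)).card = A.card * Δ := by
      have e1 : ∑ i ∈ A, (miss L i).card
          = ∑ v : Fin n, (A.filter (fun i => v ∈ miss L i)).card := by
        have : ∀ i ∈ A, (miss L i).card = ∑ v : Fin n, if v ∈ miss L i then 1 else 0 := by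
          intro i _
          rw [← Finset.card_filter,
            show (univ.filter (fun v => v ∈ miss L i)) = miss L i by simp [miss]]
        rw [Finset.sum_congr rfl this, Finset.sum_comm]
        simp_rw [Finset.card_filter]
      rw [← e1, Finset.sum_congr rfl (fun i _ => card_miss L (le_of_lt hsn) hrow i)]
      simp [mul_comm, hΔdef]
    by_cases hS : ∃ d, Sum.inr d ∈ S
    · -- case with a dummy vertex
      obtain ⟨d, hdS⟩ := hS
      set C : Finset (Fin n) := univ.filter (fun v => dcount L v = Δ) with hC
      set X : Finset (Fin n) := C.filter (fun v => v ∈ NA) with hX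
      -- key inequality: A.card + C.card ≤ X.card + r
      have hsplit : ∑ v ∈ C, (A.filter (fun i => v ∈ miss L i)).card
          + ∑ v ∈ Cᶜ, (A.filter (fun i => v ∈ miss L i)).card = A.card * Δ := by
        rw [← hsum, Finset.sum_add_sum_compl]
      have h1 : ∑ v ∈ C, (A.filter (fun i => v ∈ miss L i)).card ≤ X.card * Δ := by
        calc ∑ v ∈ C, (A.filter (fun i => v ∈ miss L i)).card
            = ∑ v ∈ X, (A.filter (fun i => v ∈ miss L i)).card := by
              rw [hX]
              refine (Finset.sum_filter_of_ne ?_).symm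
              intro v hv h
              by_contra hvNA
              exact h (hav0 v hvNA)
          _ ≤ ∑ v ∈ X, Δ := Finset.sum_le_sum (fun v hv => le_trans (hav_le v) (hd v))
          _ = X.card * Δ := by rw [Finset.sum_const, smul_eq_mul]
      have h2 : ∑ v ∈ C, dcount L v = C.card * Δ := by
        rw [Finset.sum_congr rfl (fun v hv => (Finset.mem_filter.1 hv).2),
          Finset.sum_const, smul_eq_mul]
      have h3 : ∑ v ∈ C, dcount L v + ∑ v ∈ Cᶜ, dcount L v = r * Δ := by
        rw [Finset.sum_add_sum_compl]
        exact sum_dcount L (le_of_lt hsn) hrow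
      have h4 : ∑ v ∈ Cᶜ, (A.filter (fun i => v ∈ miss L i)).card
          ≤ ∑ v ∈ Cᶜ, dcount L v := Finset.sum_le_sum (fun v _ => hav_le v)
      have key : (A.card + C.card) * Δ ≤ (X.card + r) * Δ := by
        rw [add_mul, add_mul]
        calc A.card * Δ + C.card * Δ
            = (∑ v ∈ C, (A.filter (fun i => v ∈ miss L i)).card
              + ∑ v ∈ Cᶜ, (A.filter (fun i => v ∈ miss L i)).card) + C.card * Δ := by
              rw [hsplit]
          _ ≤ (X.card * Δ + ∑ v ∈ Cᶜ, dcount L v) + ∑ v ∈ C, dcount L v := by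
              rw [← h2]; exact add_le_add (add_le_add h1 h4) le_rfl
          _ = X.card * Δ + r * Δ := by rw [add_assoc, add_comm (∑ v ∈ Cᶜ, dcount L v), h3]
      have key2 : A.card + C.card ≤ X.card + r := Nat.le_of_mul_le_mul_right key hΔ
      -- lower bound on biUnion
      have hNC : (univ.filter (fun v => dcount L v < Δ)) = Cᶜ := by
        rw [hC, Finset.compl_filter]
        apply Finset.filter_congr
        intro v _
        have := hd v
        constructor <;> intro h <;> omega
      have hsubU : Cᶜ ∪ X ⊆ S.biUnion t := by
        apply Finset.union_subset
        · intro v hv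
          apply Finset.mem_biUnion.2 ⟨Sum.inr d, hdS, ?_⟩
          show v ∈ univ.filter (fun v => dcount L v < Δ)
          rw [hNC]; exact hv
        · exact subset_trans (fun v hv => (Finset.mem_filter.1 hv).2) hNAsub
      have hdisj : Disjoint Cᶜ X := by
        rw [hX]
        exact Finset.disjoint_left.2 (fun v hv hvX =>
          (Finset.mem_compl.1 hv) (Finset.mem_filter.1 hvX).1)
      have hcardU : Cᶜ.card + X.card ≤ (S.biUnion t).card := by
        rw [← Finset.card_union_of_disjoint hdisj]
        exact Finset.card_le_card hsubU
      have hCcompl : Cᶜ.card + C.card = n := by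
        rw [Finset.card_compl]
        have : C.card ≤ n := le_trans (Finset.card_le_univ C) (by simp)
        simp only [Fintype.card_fin]
        omega
      -- S.card ≤ A.card + (n - r)
      have hScard : S.card ≤ A.card + (n - r) := by
        have hsub : S ⊆ A.image Sum.inl ∪ (univ : Finset (Fin (n-r))).image Sum.inr := by
          intro x hx
          match x with
          | Sum.inl i =>
            exact Finset.mem_union_left _ (Finset.mem_image.2 ⟨i,
              Finset.mem_filter.2 ⟨Finset.mem_univ i, hx⟩, rfl⟩)
          | Sum.inr e =>
            exact Finset.mem_union_right _ (Finset.mem_image.2 ⟨e, Finset.mem_univ e, rfl⟩)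
        calc S.card ≤ (A.image Sum.inl ∪ (univ : Finset (Fin (n-r))).image Sum.inr).card :=
              Finset.card_le_card hsub
          _ ≤ (A.image Sum.inl).card + ((univ : Finset (Fin (n-r))).image Sum.inr).card :=
              Finset.card_union_le _ _
          _ ≤ A.card + (n - r) := by
              apply add_le_add (Finset.card_image_le)
              exact le_trans Finset.card_image_le (by simp)
      omega
    · -- case all in left
      push_neg at hS
      have hsub : S ⊆ A.image Sum.inl := by
        intro x hx
        match x with
        | Sum.inl i =>
          exact Finset.mem_image.2 ⟨i, Finset.mem_filter.2 ⟨Finset.mem_univ i, hx⟩, rfl⟩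
        | Sum.inr e => exact absurd hx (hS e)
      have hScard : S.card ≤ A.card :=
        le_trans (Finset.card_le_card hsub) Finset.card_image_le
      have hANA : A.card ≤ NA.card := by
        apply Nat.le_of_mul_le_mul_right _ hΔ
        calc A.card * Δ = ∑ v : Fin n, (A.filter (fun i => v ∈ miss L i)).card := hsum.symm
          _ = ∑ v ∈ NA, (A.filter (fun i => v ∈ miss L i)).card := by
              rw [show NA = univ.filter (fun v => v ∈ NA) by simp]
              refine (Finset.sum_filter_of_ne ?_).symm
              intro v _ h
              by_contra hvNA
              exact h (hav0 v hvNA)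
          _ ≤ ∑ v ∈ NA, Δ := Finset.sum_le_sum (fun v hv => le_trans (hav_le v) (hd v))
          _ = NA.card * Δ := by rw [Finset.sum_const, smul_eq_mul]
      exact le_trans hScard (le_trans hANA (Finset.card_le_card hNAsub))
  -- apply Hall
  obtain ⟨f, hfinj, hft⟩ := (Finset.all_card_le_biUnion_card_iff_exists_injective t).1 hall
  have hfsurj : Function.Surjective f := by
    have hcard : Fintype.card (Fin r ⊕ Fin (n - r)) = Fintype.card (Fin n) := by
      simp; omega
    exact ((Fintype.bijective_iff_injective_and_card f).2 ⟨hfinj, hcard⟩).2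
  set g : Fin r → Fin n := fun i => f (Sum.inl i) with hg
  have hg1 : ∀ i j, L i j ≠ g i := by
    intro i
    have := hft (Sum.inl i)
    simp only [ht, miss, Finset.mem_filter] at this
    exact this.2
  have hg2 : Function.Injective g := by
    intro i i' h
    have := hfinj (a₁ := Sum.inl i) (a₂ := Sum.inl i') h
    injection this
  have hgC : ∀ v, dcount L v = Δ → ∃ i, g i = v := by
    intro v hv
    obtain ⟨x, hx⟩ := hfsurj v
    match x with
    | Sum.inl i => exact ⟨i, hx⟩
    | Sum.inr e =>
      have := hft (Sum.inr e)
      simp only [ht, Finset.mem_filter, hx] at this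
      omega
  -- define L'
  set L' : Fin r → Fin (s+1) → Fin n :=
    fun i j => if h : (j : ℕ) < s then L i ⟨j, h⟩ else g i with hL'
  have hcast : ∀ i (j : Fin (s+1)) (h : (j : ℕ) < s), L' i j = L i ⟨j, h⟩ := by
    intro i j h; simp only [hL', dif_pos h]
  have hlast : ∀ i (j : Fin (s+1)), ¬ (j : ℕ) < s → L' i j = g i := by
    intro i j h; simp only [hL', dif_neg h]
  refine ⟨L', ?_, ?_, ?_, ?_⟩
  · -- rows injective
    intro i j1 j2 h
    by_cases h1 : (j1 : ℕ) < s <;> by_cases h2 : (j2 : ℕ) < s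
    · rw [hcast i j1 h1, hcast i j2 h2] at h
      have h12 := hrow i h
      have : (j1 : ℕ) = j2 := by simpa using congrArg Fin.val h12
      exact Fin.ext this
    · rw [hcast i j1 h1, hlast i j2 h2] at h
      exact absurd h (hg1 i ⟨j1, h1⟩)
    · rw [hlast i j1 h1, hcast i j2 h2] at h
      exact absurd h.symm (hg1 i ⟨j2, h2⟩)
    · have e1 : (j1 : ℕ) = s := by omega
      have e2 : (j2 : ℕ) = s := by omega
      exact Fin.ext (by omega)
  · -- columns injective
    intro j i i' h
    replace h : L' i j = L' i' j := h
    by_cases hj : (j : ℕ) < s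
    · rw [hcast i j hj, hcast i' j hj] at h
      exact hcol ⟨j, hj⟩ h
    · rw [hlast i j hj, hlast i' j hj] at h
      exact hg2 h
  · -- dcount bound
    intro v
    show (univ.filter (fun i => v ∈ miss L' i)).card ≤ n - (s+1)
    have hsubF : (univ.filter (fun i => v ∈ miss L' i))
        ⊆ (univ.filter (fun i => v ∈ miss L i)) := by
      intro i hi
      simp only [miss, Finset.mem_filter, Finset.mem_univ, true_and] at hi ⊢
      intro j
      have := hi ⟨j.1, by omega⟩
      rwa [hcast i ⟨j.1, by omega⟩ j.2, Fin.eta] at this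
    rcases Nat.lt_or_ge (dcount L v) Δ with hv | hv
    · have := Finset.card_le_card hsubF
      unfold dcount at hv
      omega
    · have hvΔ : dcount L v = Δ := le_antisymm (hd v) hv
      obtain ⟨i0, hi0⟩ := hgC v hvΔ
      have hi0F : i0 ∈ univ.filter (fun i => v ∈ miss L i) := by
        simp only [miss, Finset.mem_filter, Finset.mem_univ, true_and]
        intro j
        rw [← hi0]; exact hg1 i0 j
      have hi0F' : i0 ∉ univ.filter (fun i => v ∈ miss L' i) := by
        simp only [miss, Finset.mem_filter, Finset.mem_univ, true_and]
        push_neg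
        refine ⟨⟨s, by omega⟩, ?_⟩
        rw [hlast i0 ⟨s, by omega⟩ (by simp)]
        exact hi0
      have hsub2 : (univ.filter (fun i => v ∈ miss L' i))
          ⊆ (univ.filter (fun i => v ∈ miss L i)).erase i0 := by
        intro x hx
        refine Finset.mem_erase.2 ⟨?_, hsubF hx⟩
        rintro rfl
        exact hi0F' hx
      have := Finset.card_le_card hsub2
      rw [Finset.card_erase_of_mem hi0F] at this
      unfold dcount at hvΔ
      omega
  · intro i j
    rw [hcast i ⟨j.1, by omega⟩ (by exact j.2), Fin.eta]

lemma extend (n r : ℕ) (hrn : r ≤ n) (tt : ℕ) :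
    ∀ (s : ℕ), s + tt = n → ∀ (L : Fin r → Fin s → Fin n),
      (∀ i, Function.Injective (L i)) → (∀ j, Function.Injective fun i => L i j) →
      (∀ v, dcount L v ≤ n - s) →
      ∃ M : Fin r → Fin n → Fin n,
        (∀ i, Function.Injective (M i)) ∧ (∀ j, Function.Injective fun i => M i j) ∧
        ∀ i (j : Fin s) (h : (j : ℕ) < n), M i ⟨j.1, h⟩ = L i j := by
  induction tt with
  | zero =>
    intro s hs L h1 h2 h3
    have hsn : s = n := by omega
    refine ⟨fun i j => L i ⟨j.1, by omega⟩, ?_, ?_, ?_⟩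
    · intro i j1 j2 h
      have := h1 i h
      exact Fin.ext (by simpa using congrArg Fin.val this)
    · intro j i1 i2 h
      exact h2 ⟨j.1, by omega⟩ h
    · intro i j h
      simp only [Fin.eta]
  | succ t ih =>
    intro s hs L h1 h2 h3
    have hsn : s < n := by omega
    obtain ⟨L', p1, p2, p3, p4⟩ := step hrn hsn L h1 h2 h3
    obtain ⟨M, q1, q2, q3⟩ := ih (s+1) (by omega) L' p1 p2 p3
    refine ⟨M, q1, q2, ?_⟩
    intro i j h
    have := q3 i ⟨j.1, by omega⟩ h
    rw [this]
    exact p4 i j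

end RyserAux

open RyserAux in
theorem ryser_extension_iff' (n r s : ℕ) (hn : 0 < n) (hr : 0 < r) (hs : 0 < s)
    (hrn : r ≤ n) (hsn : s ≤ n)
    (L : Fin r → Fin s → Fin n)
    (hrow : ∀ i, Function.Injective (L i))
    (hcol : ∀ j, Function.Injective fun i => L i j) :
    (∃ M : Fin r → Fin n → Fin n,
        (∀ i, Function.Injective (M i)) ∧
        (∀ j, Function.Injective fun i => M i j) ∧
        ∀ (i : Fin r) (j : Fin s), M i (Fin.castLE hsn j) = L i j) ↔
      (∀ v : Fin n,
        (r : ℤ) + s - n ≤ {p : Fin r × Fin s | L p.1 p.2 = v}.ncard) := by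
  classical
  have hncard : ∀ v : Fin n, {p : Fin r × Fin s | L p.1 p.2 = v}.ncard
      = (univ.filter (fun p : Fin r × Fin s => L p.1 p.2 = v)).card := by
    intro v
    rw [show {p : Fin r × Fin s | L p.1 p.2 = v}
      = ↑(univ.filter (fun p : Fin r × Fin s => L p.1 p.2 = v)) by ext p; simp]
    exact Set.ncard_coe_finset _
  constructor
  · -- necessity
    rintro ⟨M, hMrow, hMcol, hML⟩ v
    rw [hncard]
    set T : Finset (Fin r × Fin n) := univ.filter (fun p => M p.1 p.2 = v) with hT
    have hTcard : T.card = r := by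
      rw [hT]
      rw [Finset.card_eq_sum_card_fiberwise
        (f := fun p : Fin r × Fin n => p.1) (t := univ) (fun x _ => Finset.mem_univ _)]
      have hone : ∀ i : Fin r,
          ((univ.filter (fun p : Fin r × Fin n => M p.1 p.2 = v)).filter
            (fun p => p.1 = i)).card = 1 := by
        intro i
        have hbij : Function.Bijective (M i) :=
          (Finite.injective_iff_bijective).1 (hMrow i)
        obtain ⟨j0, hj0⟩ := hbij.2 v
        rw [Finset.card_eq_one]
        refine ⟨(i, j0), ?_⟩
        ext p
        simp only [Finset.mem_filter, Finset.mem_univ, true_and, Finset.mem_singleton]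
        constructor
        · rintro ⟨hp1, hp2⟩
          obtain ⟨a, b⟩ := p
          simp only at hp1 hp2
          subst hp2
          have : b = j0 := hbij.1 (hp1.trans hj0.symm)
          subst this; rfl
        · rintro rfl
          exact ⟨hj0, rfl⟩
      rw [Finset.sum_congr rfl (fun i _ => hone i)]
      simp
    set T1 := T.filter (fun p => (p.2 : ℕ) < s) with hT1
    set T2 := T.filter (fun p => ¬ (p.2 : ℕ) < s) with hT2
    have hsplit : T1.card + T2.card = r := by
      rw [hT1, hT2, Finset.card_filter_add_card_filter_not, hTcard]
    have hT2le : T2.card ≤ n - s := by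
      have hmap : T2.card ≤ (univ.filter (fun j : Fin n => ¬ (j : ℕ) < s)).card := by
        apply Finset.card_le_card_of_injOn (fun p => p.2)
        · intro p hp
          simp only [hT2, Finset.mem_filter] at hp
          simp only [Finset.mem_filter, Finset.mem_univ, true_and]
          exact Finset.mem_coe.2 (Finset.mem_filter.2 ⟨Finset.mem_univ _, (Finset.mem_filter.1 hp).2⟩)
        · intro p hp q hq hpq
          simp only [hT2, hT, Finset.mem_filter, Finset.mem_univ, true_and,
            Finset.coe_filter, Set.mem_setOf_eq] at hp hq
          have h1 : M p.1 p.2 = v := hp.1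
          have h2 : M q.1 q.2 = v := hq.1
          replace hpq : p.2 = q.2 := hpq
          rw [hpq] at h1
          have : p.1 = q.1 := hMcol q.2 (h1.trans h2.symm)
          exact Prod.ext this hpq
      have : (univ.filter (fun j : Fin n => ¬ (j : ℕ) < s)).card = n - s := by
        have h2 := Finset.card_filter_add_card_filter_not
          (s := (univ : Finset (Fin n))) (fun j : Fin n => (j : ℕ) < s)
        have h3 : (univ.filter (fun j : Fin n => (j : ℕ) < s)).card = s := by
          have him : univ.filter (fun j : Fin n => (j : ℕ) < s)
              = Finset.image (Fin.castLE hsn) Finset.univ := by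
            ext j
            rw [Finset.mem_filter, Finset.mem_image]
            constructor
            · rintro ⟨-, hj⟩
              exact ⟨⟨j.1, hj⟩, Finset.mem_univ _, Fin.ext rfl⟩
            · rintro ⟨k, -, rfl⟩
              exact ⟨Finset.mem_univ _, k.2⟩
          rw [him, Finset.card_image_of_injective _ (Fin.castLE_injective hsn)]
          simp
        simp only [card_univ, Fintype.card_fin] at h2
        omega
      omega
    have hT1eq : (univ.filter (fun p : Fin r × Fin s => L p.1 p.2 = v)).card = T1.card := by
      apply Finset.card_bij (fun p _ => (p.1, Fin.castLE hsn p.2))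
      · intro p hp
        simp only [Finset.mem_filter, Finset.mem_univ, true_and] at hp
        simp only [hT1, hT, Finset.mem_filter, Finset.mem_univ, true_and]
        exact ⟨by rw [hML]; exact hp, p.2.2⟩
      · intro p1 hp1 p2 hp2 h
        have h1 : p1.1 = p2.1 := (Prod.ext_iff.1 h).1
        have h2 : p1.2 = p2.2 := Fin.castLE_injective hsn (Prod.ext_iff.1 h).2
        exact Prod.ext h1 h2
      · intro p hp
        simp only [hT1, hT, Finset.mem_filter, Finset.mem_univ, true_and] at hp
        obtain ⟨hp1, hp2⟩ := hp
        refine ⟨(p.1, ⟨p.2.1, hp2⟩), ?_, ?_⟩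
        · simp only [Finset.mem_filter, Finset.mem_univ, true_and]
          have hc : Fin.castLE hsn ⟨p.2.1, hp2⟩ = p.2 := Fin.ext rfl
          rw [← hML, hc]
          exact hp1
        · exact Prod.ext rfl (Fin.ext rfl)
    rw [hT1eq]
    omega
  · -- sufficiency
    intro hN
    have hd : ∀ v, dcount L v ≤ n - s := by
      intro v
      have h1 := Finset.card_filter_add_card_filter_not
        (s := (univ : Finset (Fin r))) (fun i => ∃ j, L i j = v)
      have h2 : (univ.filter (fun p : Fin r × Fin s => L p.1 p.2 = v)).card
          ≤ (univ.filter (fun i : Fin r => ∃ j, L i j = v)).card := by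
        apply Finset.card_le_card_of_injOn (fun p => p.1)
        · intro p hp
          simp only [Finset.mem_filter, Finset.mem_univ, true_and] at hp ⊢
          exact Finset.mem_coe.2 (Finset.mem_filter.2 ⟨Finset.mem_univ _, p.2, (Finset.mem_filter.1 hp).2⟩)
        · intro p hp q hq hpq
          replace hpq : p.1 = q.1 := hpq
          simp only [Finset.coe_filter, Set.mem_setOf_eq] at hp hq
          have hp2 : L p.1 p.2 = v := hp.2
          have hq2 : L q.1 q.2 = v := hq.2
          rw [hpq] at hp2
          have : p.2 = q.2 := hrow q.1 (hp2.trans hq2.symm)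
          exact Prod.ext hpq this
      have h3 := hN v
      rw [hncard] at h3
      have h4 : dcount L v = (univ.filter (fun i : Fin r => ¬ ∃ j, L i j = v)).card := by
        unfold dcount miss
        congr 1
        apply Finset.filter_congr
        intro i _
        simp
      simp only [card_univ, Fintype.card_fin] at h1
      omega
    obtain ⟨M, q1, q2, q3⟩ := extend n r hrn (n - s) s (by omega) L hrow hcol hd
    refine ⟨M, q1, q2, ?_⟩
    intro i j
    exact q3 i j (by omega)


/-- Ryser's theorem: an `r × s` partial Latin rectangle `L` with entries in
`{1,…,n}` extends to an `r × n` partial Latin rectangle iff every value `v`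
occurs at least `r + s − n` times in `L`. -/
theorem ryser_extension_iff (n r s : ℕ) (hn : 0 < n) (hr : 0 < r) (hs : 0 < s)
    (hrn : r ≤ n) (hsn : s ≤ n)
    (L : Fin r → Fin s → Fin n)
    (hrow : ∀ i, Function.Injective (L i))
    (hcol : ∀ j, Function.Injective fun i => L i j) :
    (∃ M : Fin r → Fin n → Fin n,
        (∀ i, Function.Injective (M i)) ∧
        (∀ j, Function.Injective fun i => M i j) ∧
        ∀ (i : Fin r) (j : Fin s), M i (Fin.castLE hsn j) = L i j) ↔
      (∀ v : Fin n,
        (r : ℤ) + s - n ≤ {p : Fin r × Fin s | L p.1 p.2 = v}.ncard) := by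
  exact ryser_extension_iff' n r s hn hr hs hrn hsn L hrow hcol
end
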